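/- Let I be a proper ideal of the free algebra k⟨X⟩, X' ⊆ X a subset, and J = I ∩ k⟨X'⟩. Suppose G_I is the reduced Groebner basis of I with respect to an admissible order, and suppose the set of leading words of G_I restricted to words on X' equals the set of leading words of the reduced Groebner basis G_J of J. Then G_J = G_I ∩ k⟨X'⟩. -/

import Mathlib

/-- The lexicographic order of the paper: `u <_lex v` iff `v` is a proper prefix of `u`,
or `u = r ++ x :: s`, `v = r ++ y :: t` with letters `x < y`. -/
def PLt {X : Type*} [LinearOrder X] (u v : List X) : Prop :=
  (v <+: u ∧ v ≠ u) ∨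
    ∃ (r s t : List X) (x y : X), x < y ∧ u = r ++ x :: s ∧ v = r ++ y :: t

def PLe {X : Type*} [LinearOrder X] (u v : List X) : Prop := PLt u v ∨ u = v

/-- A nonempty word is Lyndon iff `u >_lex w ++ v` for every factorization `u = v ++ w`
with `v, w` nonempty. -/
def IsLyndon {X : Type*} [LinearOrder X] (u : List X) : Prop :=
  u ≠ [] ∧ ∀ v w : List X, u = v ++ w → v ≠ [] → w ≠ [] → PLt (w ++ v) u

/-- The graded lex order: compare first by degree, then by `<_lex`. -/
def GLt {X : Type*} [LinearOrder X] (deg : X → ℕ) (u v : List X) : Prop :=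
  (u.map deg).sum < (v.map deg).sum ∨ ((u.map deg).sum = (v.map deg).sum ∧ PLt u v)

/-- The free algebra `k⟨X⟩`, with the words on `X` as a basis. -/
abbrev FreeAlg (k X : Type*) [Field k] := MonoidAlgebra k (FreeMonoid X)

/-- `w` is the leading word of `f` with respect to the order `lt` on words. -/
def IsLeadingWord {k X : Type*} [Field k] (lt : FreeMonoid X → FreeMonoid X → Prop)
    (f : FreeAlg k X) (w : FreeMonoid X) : Prop :=
  w ∈ f.coeff.support ∧ ∀ u ∈ f.coeff.support, u ≠ w → lt u w

/-- A word is reducible with respect to a set `S ⊆ k⟨X⟩` if it is the leading word of a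
nonzero element of `S`. -/
def Reducible {k X : Type*} [Field k] (lt : FreeMonoid X → FreeMonoid X → Prop)
    (S : Set (FreeAlg k X)) (w : FreeMonoid X) : Prop :=
  ∃ f ∈ S, f ≠ 0 ∧ IsLeadingWord lt f w

/-- `v` is a factor of `u`. -/
def IsFactor {X : Type*} (v u : FreeMonoid X) : Prop := ∃ a b : FreeMonoid X, u = a * v * b

/-- `G` is a Groebner basis of the set `S ⊆ k⟨X⟩`: `G ⊆ S` and every `S`-reducible word
has a factor which is a leading word of some element of `G`. -/
def IsGroebnerBasis {k X : Type*} [Field k] (lt : FreeMonoid X → FreeMonoid X → Prop)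
    (S G : Set (FreeAlg k X)) : Prop :=
  G ⊆ S ∧ ∀ w : FreeMonoid X, Reducible lt S w →
    ∃ g ∈ G, g ≠ 0 ∧ ∃ wg : FreeMonoid X, IsLeadingWord lt g wg ∧ IsFactor wg w

/-- `G` is reduced: `0 ∉ G`, every `g ∈ G` is monic, and no word occurring in `g ∈ G` has
a factor which is a leading word of another element of `G`. -/
def IsReducedSet {k X : Type*} [Field k] (lt : FreeMonoid X → FreeMonoid X → Prop)
    (G : Set (FreeAlg k X)) : Prop :=
  (0 : FreeAlg k X) ∉ G ∧ ∀ f ∈ G,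
    (∃ w : FreeMonoid X, IsLeadingWord lt f w ∧ f.coeff w = 1) ∧
    ∀ u ∈ f.coeff.support, ∀ g ∈ G, g ≠ f →
      ∀ wg : FreeMonoid X, IsLeadingWord lt g wg → ¬ IsFactor wg u


section Aux

variable {X : Type*} {lt : FreeMonoid X → FreeMonoid X → Prop}

lemma aux_lt_asymm (hwf : WellFounded lt) : ∀ u v, lt u v → lt v u → False := by
  intro u
  induction u using hwf.induction with
  | _ u ih => exact fun v huv hvu => ih v hvu u hvu huv

lemma aux_no_cycle3 (hwf : WellFounded lt) :
    ∀ a b c, lt a b → lt b c → lt c a → False := by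
  intro a
  induction a using hwf.induction with
  | _ a ih => exact fun b c hab hbc hca => ih c hca a b hca hab hbc

lemma aux_lt_trans (hwf : WellFounded lt) (htot : ∀ u v, lt u v ∨ u = v ∨ lt v u) :
    ∀ a b c, lt a b → lt b c → lt a c := by
  intro a b c hab hbc
  rcases htot a c with h | rfl | h
  · exact h
  · exact absurd hbc (fun hbc => aux_lt_asymm hwf _ _ hab hbc)
  · exact absurd h (fun h => aux_no_cycle3 hwf a b c hab hbc h)

lemma aux_no_factor_lt (hwf : WellFounded lt)
    (hcompat : ∀ u v w : FreeMonoid X, lt u v → lt (w * u) (w * v) ∧ lt (u * w) (v * w)) :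
    ∀ u a b : FreeMonoid X, ¬ lt (a * u * b) u := by
  intro u
  induction u using hwf.induction with
  | _ u ih =>
    intro a b h
    exact ih (a * u * b) h a b ((hcompat _ _ b (hcompat _ _ a h).1).2)

lemma aux_exists_max (hwf : WellFounded lt) (htot : ∀ u v, lt u v ∨ u = v ∨ lt v u) :
    ∀ s : Finset (FreeMonoid X), s.Nonempty → ∃ m ∈ s, ∀ u ∈ s, u ≠ m → lt u m := by
  classical
  intro s hs
  induction s using Finset.induction_on with
  | empty => exact absurd hs (by simp)
  | @insert a s ha ih =>
    rcases s.eq_empty_or_nonempty with rfl | hsne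
    · exact ⟨a, by simp, by simp⟩
    · obtain ⟨m, hm, hmax⟩ := ih hsne
      rcases htot a m with h | rfl | h
      · refine ⟨m, Finset.mem_insert_of_mem hm, fun u hu hne => ?_⟩
        rcases Finset.mem_insert.1 hu with rfl | hu'
        · exact h
        · exact hmax u hu' hne
      · refine ⟨a, Finset.mem_insert_self _ _, fun u hu hne => ?_⟩
        rcases Finset.mem_insert.1 hu with rfl | hu'
        · exact absurd rfl hne
        · exact hmax u hu' hne
      · refine ⟨a, Finset.mem_insert_self _ _, fun u hu hne => ?_⟩
        rcases Finset.mem_insert.1 hu with rfl | hu'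
        · exact absurd rfl hne
        · by_cases hum : u = m
          · exact hum ▸ h
          · exact aux_lt_trans hwf htot _ _ _ (hmax u hu' hum) h

lemma aux_factor_letters {v u : FreeMonoid X} (h : IsFactor v u) :
    ∀ x ∈ FreeMonoid.toList v, x ∈ FreeMonoid.toList u := by
  obtain ⟨a, b, rfl⟩ := h
  intro x hx
  simp only [FreeMonoid.toList_mul, List.mem_append]
  tauto

end Aux

section Aux2

variable {k X : Type*} [Field k] {lt : FreeMonoid X → FreeMonoid X → Prop}

lemma aux_lw_unique (hwf : WellFounded lt) {f : FreeAlg k X} {w1 w2 : FreeMonoid X}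
    (h1 : IsLeadingWord lt f w1) (h2 : IsLeadingWord lt f w2) : w1 = w2 := by
  by_contra hne
  exact aux_lt_asymm hwf _ _ (h2.2 w1 h1.1 hne) (h1.2 w2 h2.1 (Ne.symm hne))

end Aux2

section Key

variable {k X : Type*} [Field k]

lemma aux_key (lt : FreeMonoid X → FreeMonoid X → Prop)
    (hwf : WellFounded lt) (htot : ∀ u v, lt u v ∨ u = v ∨ lt v u)
    (hcompat : ∀ u v w : FreeMonoid X, lt u v → lt (w * u) (w * v) ∧ lt (u * w) (v * w))
    (I : TwoSidedIdeal (FreeAlg k X)) (X' : Set X)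
    (J : Set (FreeAlg k X))
    (hJ : J = {f : FreeAlg k X | f ∈ I ∧
      ∀ w ∈ f.coeff.support, ∀ x ∈ FreeMonoid.toList w, x ∈ X'})
    (GI GJ : Set (FreeAlg k X))
    (hGI : IsGroebnerBasis lt (I : Set (FreeAlg k X)) GI) (hGIred : IsReducedSet lt GI)
    (hGJ : IsGroebnerBasis lt J GJ) (hGJred : IsReducedSet lt GJ)
    (hlw : {w : FreeMonoid X | (∃ f ∈ GI, IsLeadingWord lt f w) ∧
        ∀ x ∈ FreeMonoid.toList w, x ∈ X'} =
      {w : FreeMonoid X | ∃ f ∈ GJ, IsLeadingWord lt f w})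
    (g h : FreeAlg k X) (hg : g ∈ GI) (hh : h ∈ GJ) (w : FreeMonoid X)
    (hgw : IsLeadingWord lt g w) (hhw : IsLeadingWord lt h w) : g = h := by
  classical
  -- monic coefficients
  obtain ⟨wg0, hlwg0, hg1⟩ := (hGIred.2 g hg).1
  have hgw1 : g.coeff w = 1 := by rwa [aux_lw_unique hwf hlwg0 hgw] at hg1
  obtain ⟨wh0, hlwh0, hh1⟩ := (hGJred.2 h hh).1
  have hhw1 : h.coeff w = 1 := by rwa [aux_lw_unique hwf hlwh0 hhw] at hh1
  by_contra hne
  set p : FreeAlg k X := g - h with hp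
  have hp0 : p ≠ 0 := sub_ne_zero.mpr hne
  have hhJ : h ∈ {f : FreeAlg k X | f ∈ I ∧
      ∀ w ∈ f.coeff.support, ∀ x ∈ FreeMonoid.toList w, x ∈ X'} := hJ ▸ (hGJ.1 hh)
  have hpI : p ∈ (I : Set (FreeAlg k X)) := by
    have hgI : g ∈ I := hGI.1 hg
    exact I.sub_mem hgI hhJ.1
  have hpw : p.coeff w = 0 := by
    rw [hp, MonoidAlgebra.coeff_sub, Finsupp.sub_apply, hgw1, hhw1, sub_self]
  have hwnot : w ∉ p.coeff.support := by
    simp [Finsupp.mem_support_iff, hpw]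
  obtain ⟨w', hw'supp, hw'max⟩ :=
    aux_exists_max hwf htot p.coeff.support (Finsupp.support_nonempty_iff.mpr (mt MonoidAlgebra.coeff_eq_zero.mp hp0))
  have hlwp : IsLeadingWord lt p w' := ⟨hw'supp, hw'max⟩
  have hw'ne : w' ≠ w := fun h' => hwnot (h' ▸ hw'supp)
  -- w' lies in the support of g or of h
  have hw'gh : w' ∈ g.coeff.support ∨ w' ∈ h.coeff.support := by
    by_contra hc
    push_neg at hc
    have h1 : g.coeff w' = 0 := Finsupp.notMem_support_iff.mp hc.1
    have h2 : h.coeff w' = 0 := Finsupp.notMem_support_iff.mp hc.2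
    have : p.coeff w' = 0 := by rw [hp, MonoidAlgebra.coeff_sub, Finsupp.sub_apply, h1, h2, sub_self]
    exact (Finsupp.mem_support_iff.mp hw'supp) this
  -- apply the Groebner basis property of GI to w'
  obtain ⟨g', hg', hg'0, wg', hlwg', hfac⟩ :=
    hGI.2 w' ⟨p, hpI, hp0, hlwp⟩
  obtain ⟨a, b, hab⟩ := hfac
  rcases hw'gh with hw'g | hw'h
  · -- w' ∈ supp g
    have hltw : lt w' w := hgw.2 w' hw'g hw'ne
    by_cases hgg : g' = g
    · subst hgg
      have : wg' = w := aux_lw_unique hwf hlwg' hgw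
      subst this
      rw [hab] at hltw
      exact aux_no_factor_lt hwf hcompat wg' a b hltw
    · exact (hGIred.2 g hg).2 w' hw'g g' hg' hgg wg' hlwg' ⟨a, b, hab⟩
  · -- w' ∈ supp h
    have hltw : lt w' w := hhw.2 w' hw'h hw'ne
    have hw'X' : ∀ x ∈ FreeMonoid.toList w', x ∈ X' := hhJ.2 w' hw'h
    have hwg'X' : ∀ x ∈ FreeMonoid.toList wg', x ∈ X' := fun x hx =>
      hw'X' x (aux_factor_letters ⟨a, b, hab⟩ x hx)
    have hmemL : wg' ∈ {w : FreeMonoid X | (∃ f ∈ GI, IsLeadingWord lt f w) ∧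
        ∀ x ∈ FreeMonoid.toList w, x ∈ X'} := ⟨⟨g', hg', hlwg'⟩, hwg'X'⟩
    rw [hlw] at hmemL
    obtain ⟨h', hh', hlwh'⟩ := hmemL
    by_cases hhh : h' = h
    · subst hhh
      have : wg' = w := aux_lw_unique hwf hlwh' hhw
      subst this
      rw [hab] at hltw
      exact aux_no_factor_lt hwf hcompat wg' a b hltw
    · exact (hGJred.2 h hh).2 w' hw'h h' hh' hhh wg' hlwh' ⟨a, b, hab⟩

end Key

theorem reduced_groebner_basis_inter {k X : Type*} [Field k]
    (lt : FreeMonoid X → FreeMonoid X → Prop)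
    (hwf : WellFounded lt) (htot : ∀ u v, lt u v ∨ u = v ∨ lt v u)
    (hcompat : ∀ u v w : FreeMonoid X, lt u v → lt (w * u) (w * v) ∧ lt (u * w) (v * w))
    (I : TwoSidedIdeal (FreeAlg k X)) (hI : (I : Set (FreeAlg k X)) ≠ Set.univ)
    (X' : Set X)
    -- `J = I ∩ k⟨X'⟩`, where `k⟨X'⟩` consists of the polynomials all of whose words have
    -- all their letters in `X'`
    (J : Set (FreeAlg k X))
    (hJ : J = {f : FreeAlg k X | f ∈ I ∧
      ∀ w ∈ f.coeff.support, ∀ x ∈ FreeMonoid.toList w, x ∈ X'})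
    (GI GJ : Set (FreeAlg k X))
    (hGI : IsGroebnerBasis lt (I : Set (FreeAlg k X)) GI) (hGIred : IsReducedSet lt GI)
    (hGJ : IsGroebnerBasis lt J GJ) (hGJred : IsReducedSet lt GJ)
    (hlw : {w : FreeMonoid X | (∃ f ∈ GI, IsLeadingWord lt f w) ∧
        ∀ x ∈ FreeMonoid.toList w, x ∈ X'} =
      {w : FreeMonoid X | ∃ f ∈ GJ, IsLeadingWord lt f w}) :
    GJ = GI ∩ {f : FreeAlg k X | ∀ w ∈ f.coeff.support, ∀ x ∈ FreeMonoid.toList w, x ∈ X'} := by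
  ext f
  constructor
  · intro hf
    obtain ⟨w, hlwf, _⟩ := (hGJred.2 f hf).1
    have hmemR : w ∈ {w : FreeMonoid X | ∃ f ∈ GJ, IsLeadingWord lt f w} := ⟨f, hf, hlwf⟩
    rw [← hlw] at hmemR
    obtain ⟨⟨g, hg, hlwg⟩, _⟩ := hmemR
    have hgf : g = f := aux_key lt hwf htot hcompat I X' J hJ GI GJ hGI hGIred hGJ hGJred
      hlw g f hg hf w hlwg hlwf
    have hfJ : f ∈ {f : FreeAlg k X | f ∈ I ∧
        ∀ w ∈ f.coeff.support, ∀ x ∈ FreeMonoid.toList w, x ∈ X'} := hJ ▸ (hGJ.1 hf)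
    exact ⟨hgf ▸ hg, hfJ.2⟩
  · rintro ⟨hf, hsupp⟩
    obtain ⟨w, hlwf, _⟩ := (hGIred.2 f hf).1
    have hmemL : w ∈ {w : FreeMonoid X | (∃ f ∈ GI, IsLeadingWord lt f w) ∧
        ∀ x ∈ FreeMonoid.toList w, x ∈ X'} := ⟨⟨f, hf, hlwf⟩, hsupp w hlwf.1⟩
    rw [hlw] at hmemL
    obtain ⟨h, hh, hlwh⟩ := hmemL
    have : f = h := aux_key lt hwf htot hcompat I X' J hJ GI GJ hGI hGIred hGJ hGJred
      hlw f h hf hh w hlwf hlwh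
    exact this ▸ hh
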